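/- For every n ≥ 0, the Apéry number B(n) = Σ_{k=0}^n binom(n,k)^2·binom(n+k,k) equals the constant term of the Laurent polynomial ((x+1)(x+y)(x+y+1)/(xy))^n. -/

import Mathlib

/-- Laurent polynomials with integer coefficients in `d` variables. -/
abbrev LP (d : ℕ) := AddMonoidAlgebra ℤ (Fin d → ℤ)

/-- The monomial `x^k` in `LP d`. -/
noncomputable def mono {d : ℕ} (k : Fin d → ℤ) : LP d := AddMonoidAlgebra.single k 1

/-- Evaluation of a polynomial in two variables at the monomials `x`, `y` of `LP 2`. -/
noncomputable def psi : Polynomial (Polynomial ℤ) →+* LP 2 :=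
  Polynomial.eval₂RingHom
    (Polynomial.eval₂RingHom (Int.castRingHom (LP 2)) (mono ![1, 0])) (mono ![0, 1])

lemma vec_eq_iff (x y x' y' : ℤ) : (![x, y] : Fin 2 → ℤ) = ![x', y'] ↔ x = x' ∧ y = y' := by
  constructor
  · intro h
    exact ⟨congrFun h 0, congrFun h 1⟩
  · rintro ⟨rfl, rfl⟩; rfl

lemma intCast_LP (c : ℤ) : ((c : ℤ) : LP 2) = AddMonoidAlgebra.single 0 c := by
  have h : (Int.castRingHom (LP 2)) = (AddMonoidAlgebra.singleZeroRingHom :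
      ℤ →+* AddMonoidAlgebra ℤ (Fin 2 → ℤ)) := RingHom.ext_int _ _
  calc ((c : ℤ) : LP 2) = Int.castRingHom (LP 2) c := rfl
    _ = (AddMonoidAlgebra.singleZeroRingHom : ℤ →+* AddMonoidAlgebra ℤ (Fin 2 → ℤ)) c := by
        rw [h]
    _ = AddMonoidAlgebra.single 0 c := rfl

lemma LP_add_apply (f g : LP 2) (v : Fin 2 → ℤ) : (f + g).coeff v = f.coeff v + g.coeff v := rfl

lemma mono_pow (k : Fin 2 → ℤ) (m : ℕ) : (mono k) ^ m = AddMonoidAlgebra.single (m • k) 1 := by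
  simp [mono, AddMonoidAlgebra.single_pow]

open Polynomial in
lemma psi_coeff (p : Polynomial (Polynomial ℤ)) (a b : ℕ) :
    (psi p).coeff (![(a : ℤ), (b : ℤ)]) = ((p.coeff b).coeff a : ℤ) := by
  induction p using Polynomial.induction_on' with
  | add p q hp hq =>
    rw [map_add, Polynomial.coeff_add, Polynomial.coeff_add, LP_add_apply, hp, hq]
  | monomial m q =>
    induction q using Polynomial.induction_on' with
    | add r s hr hs =>
      simp only [map_add, Polynomial.coeff_add, LP_add_apply, hr, hs]
    | monomial k c =>
      have hout : psi (monomial m (monomial k c)) =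
          AddMonoidAlgebra.single 0 c * (mono ![1, 0]) ^ k * (mono ![0, 1]) ^ m := by
        simp [psi, Polynomial.eval₂_monomial, intCast_LP]
      rw [hout, mono_pow, mono_pow, mul_assoc, AddMonoidAlgebra.single_mul_single,
        AddMonoidAlgebra.single_mul_single]
      have hvec : ((0 : Fin 2 → ℤ) + (k • ![1, 0] + m • ![0, 1])) = ![(k : ℤ), (m : ℤ)] := by
        funext i
        fin_cases i <;> simp
      rw [hvec, mul_one, mul_one, Polynomial.coeff_monomial]
      rcases eq_or_ne b m with rfl | hbm
      · rw [if_pos rfl, Polynomial.coeff_monomial]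
        rcases eq_or_ne a k with rfl | hak
        · rw [if_pos rfl, AddMonoidAlgebra.coeff_single_apply, if_pos rfl]
        · rw [if_neg (Ne.symm hak), AddMonoidAlgebra.coeff_single_apply, if_neg]
          intro h
          have h2 := ((vec_eq_iff _ _ _ _).1 h).1
          exact hak (by exact_mod_cast h2.symm)
      · rw [if_neg (Ne.symm hbm), AddMonoidAlgebra.coeff_single_apply, if_neg, Polynomial.coeff_zero]
        intro h
        have h2 := ((vec_eq_iff _ _ _ _).1 h).2
        exact hbm (by exact_mod_cast h2.symm)

open Polynomial in
lemma term_coeff (n k : ℕ) (hk : k ≤ n) :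
    (((X + 1 : ℤ[X]) ^ n * (X ^ k * (((n + k).choose n : ℤ[X]))))
        * ((n.choose k : ℤ[X]))).coeff n
      = ((n.choose k : ℤ)) ^ 2 * (((n + k).choose k : ℤ)) := by
  have h : ((X + 1 : ℤ[X]) ^ n * (X ^ k * (((n + k).choose n : ℤ[X]))))
        * ((n.choose k : ℤ[X]))
      = ((X ^ k * (X + 1) ^ n) * (((n + k).choose n : ℤ[X]))) * ((n.choose k : ℤ[X])) := by
    ring
  rw [h, Polynomial.coeff_mul_natCast, Polynomial.coeff_mul_natCast]
  have h2 := Polynomial.coeff_X_pow_mul ((X + 1 : ℤ[X]) ^ n) k (n - k)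
  rw [show n - k + k = n by omega] at h2
  rw [h2, Polynomial.coeff_X_add_one_pow, Nat.choose_symm hk]
  have h3 : (n + k).choose n = (n + k).choose k := by
    rw [← Nat.choose_symm (Nat.le_add_left k n)]
    congr 1
    omega
  rw [h3]
  ring

open Polynomial in
lemma key (n : ℕ) :
    ((((C X + 1) * (C X + X) * (C X + X + 1) : ℤ[X][X]) ^ n).coeff n).coeff n
      = (∑ k ∈ Finset.range (n + 1), (n.choose k) ^ 2 * ((n + k).choose k) : ℤ) := by
  have h2 : ∀ r : ℤ[X][X], (r * (r + 1)) ^ n = ∑ k ∈ Finset.range (n + 1),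
      r ^ (n + k) * ((n.choose k : ℤ[X][X])) := by
    intro r
    rw [mul_pow, add_pow, Finset.mul_sum]
    refine Finset.sum_congr rfl fun k _ => ?_
    rw [one_pow, mul_one, ← mul_assoc, ← pow_add]
  have h1 : ((C X + 1) * (C X + X) * (C X + X + 1) : ℤ[X][X])
      = C (X + 1) * ((X + C X) * ((X + C X) + 1)) := by
    rw [map_add, map_one]
    ring
  rw [h1, mul_pow, ← Polynomial.C_pow, h2, Finset.mul_sum]
  rw [Polynomial.finset_sum_coeff]
  have h3 : ∀ k ∈ Finset.range (n + 1),
      (C ((X + 1 : ℤ[X]) ^ n) * ((X + C X) ^ (n + k) * ((n.choose k : ℤ[X][X])))).coeff n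
        = (X + 1 : ℤ[X]) ^ n * (X ^ k * (((n + k).choose n : ℤ[X])))
            * ((n.choose k : ℤ[X])) := by
    intro k _
    rw [← mul_assoc, Polynomial.coeff_mul_natCast, Polynomial.coeff_C_mul,
      Polynomial.coeff_X_add_C_pow, show n + k - n = k by omega, mul_assoc]
  rw [Finset.sum_congr rfl h3, Polynomial.finset_sum_coeff]
  refine Finset.sum_congr rfl fun k hk => ?_
  exact term_coeff n k (Nat.lt_succ_iff.mp (Finset.mem_range.mp hk))

/-- The Apéry number `B(n) = Σ_k binom(n,k)² binom(n+k,k)` is the constant term of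
`((x+1)(x+y)(x+y+1)/(xy))^n`. -/
theorem apery2_eq_constantTerm (n : ℕ) :
    (((mono ![1, 0] + 1) * (mono ![1, 0] + mono ![0, 1]) * (mono ![1, 0] + mono ![0, 1] + 1)
        * mono ![-1, -1]) ^ n : LP 2).coeff (0 : Fin 2 → ℤ)
      = (∑ k ∈ Finset.range (n + 1), (n.choose k) ^ 2 * ((n + k).choose k) : ℤ) := by
  open Polynomial in
  have hx : psi (C X) = mono ![1, 0] := by
    simp [psi, mono]
  open Polynomial in
  have hy : psi (X : Polynomial (Polynomial ℤ)) = mono ![0, 1] := by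
    simp [psi]
  open Polynomial in
  have hA : (mono ![1, 0] + 1) * (mono ![1, 0] + mono ![0, 1]) * (mono ![1, 0] + mono ![0, 1] + 1)
      = psi ((C X + 1) * (C X + X) * (C X + X + 1)) := by
    rw [map_mul, map_mul, map_add, map_add, map_add, map_add, map_one, hx, hy]
  rw [hA, mul_pow, ← map_pow, mono_pow]
  rw [AddMonoidAlgebra.coeff_mul_single_apply]
  have hv : (0 : Fin 2 → ℤ) + -(n • ![-1, -1]) = ![(n : ℤ), (n : ℤ)] := by
    funext i
    fin_cases i <;> simp
  rw [hv, mul_one, psi_coeff, key]
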